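/- For every integer n ≥ 6, there exists a planar graph G on n vertices with ⌈5n/2⌉ − 5 edges that contains no two vertex-disjoint triangles; consequently ex_P(n, 2C_3) ≥ ⌈5n/2⌉ − 5. -/

import Mathlib

open SimpleGraph

/-- A graph is planar if it admits a drawing in the plane: vertices are mapped to distinct
points, each edge is drawn as a simple continuous arc between the images of its endpoints,
the interior of each arc avoids all vertex images, and the interiors of arcs of distinct
edges are pairwise disjoint. -/
def IsPlanar {V : Type*} (G : SimpleGraph V) : Prop :=
  ∃ (pos : V → ℝ × ℝ) (arc : V → V → ℝ → ℝ × ℝ),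
    Function.Injective pos ∧
    (∀ u v, G.Adj u v →
      Continuous (arc u v) ∧
      arc u v 0 = pos u ∧ arc u v 1 = pos v ∧
      Set.InjOn (arc u v) (Set.Icc 0 1) ∧
      (∀ t ∈ Set.Ioo (0:ℝ) 1, ∀ w, arc u v t ≠ pos w) ∧
      (∀ t, arc u v t = arc v u (1 - t))) ∧
    (∀ u v x y, G.Adj u v → G.Adj x y → s(u, v) ≠ s(x, y) →
      ∀ s ∈ Set.Ioo (0:ℝ) 1, ∀ t ∈ Set.Ioo (0:ℝ) 1, arc u v s ≠ arc x y t)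

/-- `G` contains a copy of `H` (i.e. a subgraph isomorphic to `H`). -/
def ContainsCopy {V W : Type*} (G : SimpleGraph V) (H : SimpleGraph W) : Prop :=
  ∃ f : H →g G, Function.Injective f

/-- The planar Turán number: the maximum number of edges of an `H`-free planar graph
on `n` vertices. -/
noncomputable def exP {W : Type*} (n : ℕ) (H : SimpleGraph W) : ℕ :=
  sSup {m | ∃ G : SimpleGraph (Fin n), IsPlanar G ∧ ¬ ContainsCopy G H ∧ G.edgeSet.ncard = m}

/-- The disjoint union of `t` copies of `G`. -/
def copies {V : Type*} (t : ℕ) (G : SimpleGraph V) : SimpleGraph (Fin t × V) where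
  Adj x y := x.1 = y.1 ∧ G.Adj x.2 y.2
  symm := by constructor; rintro ⟨i, a⟩ ⟨j, b⟩ ⟨h1, h2⟩; exact ⟨h1.symm, h2.symm⟩
  loopless := by constructor; rintro ⟨i, a⟩ ⟨_, h⟩; exact G.irrefl h

/-- `C_k^+`: the cycle on `k` vertices together with one pendant edge. -/
def cyclePlus (k : ℕ) : SimpleGraph (Fin k ⊕ Unit) :=
  SimpleGraph.fromRel (fun x y =>
    (∃ a b : Fin k, x = Sum.inl a ∧ y = Sum.inl b ∧ (cycleGraph k).Adj a b) ∨
    (∃ a : Fin k, (a : ℕ) = 0 ∧ x = Sum.inl a ∧ y = Sum.inr ()))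

def Erel (n a b : ℕ) : Prop :=
  (a = 0 ∧ 0 < b ∧ b < n) ∨ (0 < a ∧ b = a + 1 ∧ b < n) ∨
  (a = 1 ∧ b = n - 1) ∨ (a = 1 ∧ b % 2 = 0 ∧ 4 ≤ b ∧ b ≤ n - 3)

instance (n a b : ℕ) : Decidable (Erel n a b) := by unfold Erel; infer_instance

def myG (n : ℕ) : SimpleGraph (Fin n) :=
  SimpleGraph.fromRel (fun x y => Erel n x.val y.val)

lemma Erel_lt {n a b : ℕ} (hn : 6 ≤ n) (h : Erel n a b) : a < b := by
  unfold Erel at h; omega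

lemma myG_adj {n : ℕ} (hn : 6 ≤ n) {x y : Fin n} :
    (myG n).Adj x y ↔ (Erel n x.val y.val ∨ Erel n y.val x.val) := by
  constructor
  · rintro ⟨-, h⟩; exact h
  · intro h
    refine ⟨?_, h⟩
    rintro rfl
    rcases h with h | h <;> exact absurd (Erel_lt hn h) (lt_irrefl _)

lemma myG_nested {n a1 b1 a2 b2 : ℕ} (hn : 6 ≤ n) (h1 : Erel n a1 b1) (h2 : Erel n a2 b2)
    (hne : ¬(a1 = a2 ∧ b1 = b2))
    (hpage : (a1 = 1 ∧ b1 ≠ 2) ↔ (a2 = 1 ∧ b2 ≠ 2)) :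
    (a1 ≤ a2 ∧ b2 ≤ b1) ∨ (a2 ≤ a1 ∧ b1 ≤ b2) ∨ b1 ≤ a2 ∨ b2 ≤ a1 := by
  unfold Erel at h1 h2
  omega

noncomputable def ff (t : ℝ) : ℝ := (1 - Real.cos (Real.pi * t)) / 2

noncomputable def sgf (n : ℕ) (u v : Fin n) : ℝ :=
  if min u.val v.val = 1 ∧ max u.val v.val ≠ 2 then -1 else 1

noncomputable def arcf (n : ℕ) (u v : Fin n) (t : ℝ) : ℝ × ℝ :=
  ((1 - ff t) * u.val + ff t * v.val,
   sgf n u v * (|(u.val : ℝ) - v.val| / 2) * Real.sin (Real.pi * t))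

lemma arc_sq (α β sg t : ℝ) (hsg : sg = 1 ∨ sg = -1) :
    -((((1 - ff t) * α + ff t * β) - α) * (((1 - ff t) * α + ff t * β) - β))
      = (sg * (|α - β| / 2) * Real.sin (Real.pi * t))^2 := by
  have habs : |α - β|^2 = (α - β)^2 := sq_abs _
  have hsc : Real.sin (Real.pi * t)^2 + Real.cos (Real.pi * t)^2 = 1 :=
    Real.sin_sq_add_cos_sq _
  rcases hsg with rfl | rfl <;>
  · unfold ff
    linear_combination (-(Real.sin (Real.pi * t))^2 / 4) * habs - (α - β)^2 / 4 * hsc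

lemma interval_pos {a b X Y : ℝ} (hab : a < b) (h : -((X - a) * (X - b)) = Y^2) (hY : Y ≠ 0) :
    a < X ∧ X < b := by
  constructor
  · by_contra hc
    push_neg at hc
    have hY2 : 0 < Y^2 := by positivity
    nlinarith
  · by_contra hc
    push_neg at hc
    have hY2 : 0 < Y^2 := by positivity
    nlinarith

lemma nested_contra {a1 b1 a2 b2 X Y : ℝ}
    (h1 : -((X - a1) * (X - b1)) = Y^2) (h2 : -((X - a2) * (X - b2)) = Y^2)
    (hY : Y ≠ 0) (ha : a1 ≤ a2) (hb : b2 ≤ b1) (hstrict : a1 < a2 ∨ b2 < b1)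
    (hab1 : a1 < b1) (hab2 : a2 < b2) : False := by
  obtain ⟨hx1, hx2⟩ := interval_pos hab2 h2 hY
  obtain ⟨hx3, hx4⟩ := interval_pos hab1 h1 hY
  rcases hstrict with h | h
  · nlinarith [mul_pos (sub_pos.mpr hx2) (sub_pos.mpr hx1)]
  · nlinarith [mul_pos (sub_pos.mpr hx2) (sub_pos.mpr hx1)]

lemma disjoint_contra {a1 b1 a2 b2 X Y : ℝ}
    (h1 : -((X - a1) * (X - b1)) = Y^2) (h2 : -((X - a2) * (X - b2)) = Y^2)
    (hY : Y ≠ 0) (hd : b1 ≤ a2) (hab1 : a1 < b1) (hab2 : a2 < b2) : False := by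
  obtain ⟨hx1, hx2⟩ := interval_pos hab2 h2 hY
  obtain ⟨hx3, hx4⟩ := interval_pos hab1 h1 hY
  linarith

lemma sgf_cases (n : ℕ) (u v : Fin n) : sgf n u v = 1 ∨ sgf n u v = -1 := by
  unfold sgf; split <;> simp

lemma adj_canon {n : ℕ} (hn : 6 ≤ n) {u v : Fin n} (h : (myG n).Adj u v) :
    Erel n (min u.val v.val) (max u.val v.val) := by
  rcases (myG_adj hn).mp h with h' | h'
  · have := Erel_lt hn h'
    rwa [min_eq_left this.le, max_eq_right this.le]
  · have := Erel_lt hn h'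
    rwa [min_eq_right this.le, max_eq_left this.le]

/-- for adjacent u v: circle equation with canonical (casted) interval endpoints -/
lemma arc_circle {n : ℕ} (hn : 6 ≤ n) {u v : Fin n} (h : (myG n).Adj u v) (t : ℝ) :
    -(((arcf n u v t).1 - (min u.val v.val : ℕ)) * ((arcf n u v t).1 - (max u.val v.val : ℕ)))
      = ((arcf n u v t).2)^2 := by
  have base := arc_sq (u.val : ℝ) (v.val : ℝ) (sgf n u v) t (sgf_cases n u v)
  rcases le_total u.val v.val with hle | hle
  · rw [min_eq_left hle, max_eq_right hle]
    exact base
  · rw [min_eq_right hle, max_eq_left hle]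
    push_cast
    unfold arcf
    dsimp only
    linear_combination base

lemma pi_mem {t : ℝ} (ht : t ∈ Set.Icc (0:ℝ) 1) : Real.pi * t ∈ Set.Icc 0 Real.pi := by
  constructor
  · exact mul_nonneg Real.pi_pos.le ht.1
  · nlinarith [Real.pi_pos, ht.2]

lemma sin_pos_of_Ioo {t : ℝ} (ht : t ∈ Set.Ioo (0:ℝ) 1) : 0 < Real.sin (Real.pi * t) := by
  apply Real.sin_pos_of_pos_of_lt_pi
  · exact mul_pos Real.pi_pos ht.1
  · nlinarith [Real.pi_pos, ht.2]

lemma same_page_final {n a1 b1 a2 b2 : ℕ} {X Y : ℝ} (hn : 6 ≤ n)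
    (hE1 : Erel n a1 b1) (hE2 : Erel n a2 b2) (hnepair : ¬(a1 = a2 ∧ b1 = b2))
    (hpage : (a1 = 1 ∧ b1 ≠ 2) ↔ (a2 = 1 ∧ b2 ≠ 2))
    (hc1 : -((X - (a1:ℝ)) * (X - (b1:ℝ))) = Y^2) (hc2 : -((X - (a2:ℝ)) * (X - (b2:ℝ))) = Y^2)
    (hYne : Y ≠ 0) : False := by
  have hlt1 : a1 < b1 := Erel_lt hn hE1
  have hlt2 : a2 < b2 := Erel_lt hn hE2
  have hlt1' : (a1:ℝ) < b1 := Nat.cast_lt.mpr hlt1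
  have hlt2' : (a2:ℝ) < b2 := Nat.cast_lt.mpr hlt2
  have hcast : ∀ p q : ℕ, p ≤ q → (p:ℝ) ≤ q := fun p q h => Nat.cast_le.mpr h
  rcases myG_nested hn hE1 hE2 hnepair hpage with ⟨h1, h2⟩ | ⟨h1, h2⟩ | h1 | h1
  · refine nested_contra hc1 hc2 hYne (hcast _ _ h1) (hcast _ _ h2) ?_ hlt1' hlt2'
    rcases (show a1 < a2 ∨ b2 < b1 by omega) with h | h
    · exact Or.inl (Nat.cast_lt.mpr h)
    · exact Or.inr (Nat.cast_lt.mpr h)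
  · refine nested_contra hc2 hc1 hYne (hcast _ _ h1) (hcast _ _ h2) ?_ hlt2' hlt1'
    rcases (show a2 < a1 ∨ b1 < b2 by omega) with h | h
    · exact Or.inl (Nat.cast_lt.mpr h)
    · exact Or.inr (Nat.cast_lt.mpr h)
  · exact disjoint_contra hc1 hc2 hYne (hcast _ _ h1) hlt1' hlt2'
  · exact disjoint_contra hc2 hc1 hYne (hcast _ _ h1) hlt2' hlt1'

lemma myG_planar {n : ℕ} (hn : 6 ≤ n) : IsPlanar (myG n) := by
  refine ⟨fun x => ((x.val : ℝ), 0), arcf n, ?_, ?_, ?_⟩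
  · intro x y hxy
    have : (x.val : ℝ) = y.val := congrArg Prod.fst hxy
    exact Fin.ext (Nat.cast_injective this)
  · intro u v huv
    have hne : (u.val : ℝ) ≠ (v.val : ℝ) := by
      intro h
      exact huv.ne (Fin.ext (Nat.cast_injective h))
    refine ⟨?_, ?_, ?_, ?_, ?_, ?_⟩
    · unfold arcf ff
      apply Continuous.prodMk <;> fun_prop
    · unfold arcf ff
      simp [Real.cos_zero, Real.sin_zero]
    · unfold arcf ff
      norm_num [Real.cos_pi, Real.sin_pi]
    · intro s hs t ht heq
      have hx : (1 - ff s) * u.val + ff s * (v.val:ℝ) = (1 - ff t) * u.val + ff t * v.val :=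
        congrArg Prod.fst heq
      have hff : ff s = ff t := by
        have hz : (ff s - ff t) * ((v.val : ℝ) - u.val) = 0 := by linear_combination hx
      -- v - u ≠ 0
        rcases mul_eq_zero.mp hz with h | h
        · linarith [sub_eq_zero.mp (by linarith : ff s - ff t = 0)]
        · exact absurd (sub_eq_zero.mp h).symm hne
      have hcos : Real.cos (Real.pi * s) = Real.cos (Real.pi * t) := by
        unfold ff at hff
        linarith
      have := Real.injOn_cos (pi_mem hs) (pi_mem ht) hcos
      exact mul_left_cancel₀ Real.pi_ne_zero this
    · intro t ht w hw
      have hy : sgf n u v * (|(u.val:ℝ) - v.val| / 2) * Real.sin (Real.pi * t) = 0 :=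
        congrArg Prod.snd hw
      have h1 : 0 < Real.sin (Real.pi * t) := sin_pos_of_Ioo ht
      have h2 : 0 < |(u.val:ℝ) - v.val| / 2 := by
        have : (u.val:ℝ) - v.val ≠ 0 := sub_ne_zero.mpr hne
        positivity
      rcases sgf_cases n u v with h3 | h3 <;> rw [h3] at hy <;> nlinarith
    · intro t
      unfold arcf
      have hmm : sgf n v u = sgf n u v := by unfold sgf; rw [min_comm, max_comm]
      have habs : |(v.val:ℝ) - u.val| = |(u.val:ℝ) - v.val| := abs_sub_comm _ _
      have hc : Real.cos (Real.pi * (1 - t)) = -Real.cos (Real.pi * t) := by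
        rw [show Real.pi * (1 - t) = Real.pi - Real.pi * t by ring, Real.cos_pi_sub]
      have hs : Real.sin (Real.pi * (1 - t)) = Real.sin (Real.pi * t) := by
        rw [show Real.pi * (1 - t) = Real.pi - Real.pi * t by ring, Real.sin_pi_sub]
      refine Prod.ext ?_ ?_
      · dsimp only; unfold ff; rw [hc]; ring
      · dsimp only; rw [hmm, habs, hs]
  · intro u v x y huv hxy hne s hs t ht heq
    -- canonical endpoints
    set a1 := min u.val v.val with ha1
    set b1 := max u.val v.val with hb1
    set a2 := min x.val y.val with ha2
    set b2 := max x.val y.val with hb2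
    have hE1 := adj_canon hn huv
    have hE2 := adj_canon hn hxy
    have hlt1 : a1 < b1 := Erel_lt hn hE1
    have hlt2 : a2 < b2 := Erel_lt hn hE2
    have hnepair : ¬(a1 = a2 ∧ b1 = b2) := by
      rintro ⟨hA, hB⟩
      apply hne
      have huvne : u.val ≠ v.val := fun h => huv.ne (Fin.ext h)
      have hxyne : x.val ≠ y.val := fun h => hxy.ne (Fin.ext h)
      have : (u.val = x.val ∧ v.val = y.val) ∨ (u.val = y.val ∧ v.val = x.val) := by omega
      rcases this with ⟨h1, h2⟩ | ⟨h1, h2⟩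
      · rw [Fin.ext h1, Fin.ext h2]
      · rw [Fin.ext h1, Fin.ext h2, Sym2.eq_swap]
    -- circle equations
    have hc1 := arc_circle hn huv s
    have hc2 := arc_circle hn hxy t
    rw [heq] at hc1
    set X := (arcf n x y t).1 with hX
    set Y := (arcf n x y t).2 with hY
    have hsin1 : 0 < Real.sin (Real.pi * s) := sin_pos_of_Ioo hs
    have hsin2 : 0 < Real.sin (Real.pi * t) := sin_pos_of_Ioo ht
    have hr2 : 0 < |(x.val:ℝ) - y.val| / 2 := by
      have hxyne : (x.val:ℝ) ≠ y.val := by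
        intro h; exact hxy.ne (Fin.ext (Nat.cast_injective h))
      have : (x.val:ℝ) - y.val ≠ 0 := sub_ne_zero.mpr hxyne
      positivity
    have hr1 : 0 < |(u.val:ℝ) - v.val| / 2 := by
      have huvne : (u.val:ℝ) ≠ v.val := by
        intro h; exact huv.ne (Fin.ext (Nat.cast_injective h))
      have : (u.val:ℝ) - v.val ≠ 0 := sub_ne_zero.mpr huvne
      positivity
    have hYne : Y ≠ 0 := by
      rw [hY]; unfold arcf; dsimp only
      rcases sgf_cases n x y with h3 | h3 <;> rw [h3] <;> nlinarith
    have hYv1 : (arcf n u v s).2 = Y := by rw [hY]; exact congrArg Prod.snd heq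
    have hYv2 : (arcf n x y t).2 = Y := hY.symm
    have e1 : (arcf n u v s).2
        = sgf n u v * (|(u.val:ℝ) - v.val| / 2) * Real.sin (Real.pi * s) := rfl
    have e2 : (arcf n x y t).2
        = sgf n x y * (|(x.val:ℝ) - y.val| / 2) * Real.sin (Real.pi * t) := rfl
    by_cases hp1 : (a1 = 1 ∧ b1 ≠ 2) <;> by_cases hp2 : (a2 = 1 ∧ b2 ≠ 2)
    · exact same_page_final hn hE1 hE2 hnepair (iff_of_true hp1 hp2) hc1 hc2 hYne
    · have hsg1 : sgf n u v = -1 := by unfold sgf; rw [← ha1, ← hb1]; exact if_pos hp1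
      have hsg2 : sgf n x y = 1 := by unfold sgf; rw [← ha2, ← hb2]; exact if_neg hp2
      have q1 : -(|(u.val:ℝ) - v.val| / 2 * Real.sin (Real.pi * s)) = Y := by
        rw [← hYv1, e1, hsg1]; ring
      have q2 : |(x.val:ℝ) - y.val| / 2 * Real.sin (Real.pi * t) = Y := by
        rw [← hYv2, e2, hsg2]; ring
      nlinarith [mul_pos hr1 hsin1, mul_pos hr2 hsin2]
    · have hsg1 : sgf n u v = 1 := by unfold sgf; rw [← ha1, ← hb1]; exact if_neg hp1
      have hsg2 : sgf n x y = -1 := by unfold sgf; rw [← ha2, ← hb2]; exact if_pos hp2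
      have q1 : |(u.val:ℝ) - v.val| / 2 * Real.sin (Real.pi * s) = Y := by
        rw [← hYv1, e1, hsg1]; ring
      have q2 : -(|(x.val:ℝ) - y.val| / 2 * Real.sin (Real.pi * t)) = Y := by
        rw [← hYv2, e2, hsg2]; ring
      nlinarith [mul_pos hr1 hsin1, mul_pos hr2 hsin2]
    · exact same_page_final hn hE1 hE2 hnepair (iff_of_false hp1 hp2) hc1 hc2 hYne

def Tset (n : ℕ) : Finset (Fin n × Fin n) :=
  Finset.univ.filter (fun p => Erel n p.1.val p.2.val)

lemma myG_edgeSet {n : ℕ} (hn : 6 ≤ n) :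
    (myG n).edgeSet = ↑((Tset n).image fun p => s(p.1, p.2)) := by
  ext e
  induction e with
  | _ u v =>
    simp only [mem_edgeSet, Finset.coe_image, Set.mem_image, Finset.mem_coe, Tset,
      Finset.mem_filter, Finset.mem_univ, true_and]
    constructor
    · intro h
      rcases (myG_adj hn).mp h with h' | h'
      · exact ⟨(u, v), h', rfl⟩
      · exact ⟨(v, u), h', Sym2.eq_swap⟩
    · rintro ⟨⟨a, b⟩, hab, he⟩
      have hadj : (myG n).Adj a b := (myG_adj hn).mpr (Or.inl hab)
      rw [← mem_edgeSet, ← he, mem_edgeSet]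
      exact hadj

lemma Tset_injOn {n : ℕ} (hn : 6 ≤ n) :
    Set.InjOn (fun p : Fin n × Fin n => s(p.1, p.2)) (Tset n) := by
  rintro ⟨a, b⟩ ha ⟨c, d⟩ hc he
  simp only [Tset, Finset.coe_filter, Set.mem_setOf_eq, Finset.mem_univ, true_and] at ha hc
  have hab := Erel_lt hn ha
  have hcd := Erel_lt hn hc
  simp only [Sym2.eq, Sym2.rel_iff', Prod.mk.injEq, Prod.swap_prod_mk] at he
  rcases he with ⟨rfl, rfl⟩ | ⟨rfl, rfl⟩
  · rfl
  · exfalso; omega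



lemma Tset_card {n : ℕ} (hn : 6 ≤ n) :
    (Tset n).card = 2 * n - 2 + (n - 5) / 2 := by
  have h1 : Tset n = (Finset.univ.filter (fun p : Fin n × Fin n => p.1.val = 0 ∧ 0 < p.2.val ∧ p.2.val < n))
      ∪ (Finset.univ.filter (fun p => 0 < p.1.val ∧ p.2.val = p.1.val + 1 ∧ p.2.val < n))
      ∪ (Finset.univ.filter (fun p => p.1.val = 1 ∧ p.2.val = n - 1))
      ∪ (Finset.univ.filter (fun p => p.1.val = 1 ∧ p.2.val % 2 = 0 ∧ 4 ≤ p.2.val ∧ p.2.val ≤ n - 3)) := by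
    ext p
    simp only [Tset, Finset.mem_filter, Finset.mem_univ, true_and, Finset.mem_union]
    unfold Erel
    tauto
  have c1 : (Finset.univ.filter (fun p : Fin n × Fin n => p.1.val = 0 ∧ 0 < p.2.val ∧ p.2.val < n)).card
      = (Finset.Ico 1 n).card := by
    refine Finset.card_bij' (fun p _ => p.2.val)
      (fun b hb => (⟨0, by omega⟩, ⟨b, (Finset.mem_Ico.mp hb).2⟩)) ?_ ?_ ?_ ?_
    · rintro ⟨a, b⟩ ha
      obtain ⟨-, h⟩ := Finset.mem_filter.mp ha
      exact Finset.mem_Ico.mpr ⟨h.2.1, h.2.2⟩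
    · intro b hb
      have h := Finset.mem_Ico.mp hb
      exact Finset.mem_filter.mpr ⟨Finset.mem_univ _, show (0:ℕ) = 0 ∧ 0 < b ∧ b < n by omega⟩
    · rintro ⟨a, b⟩ ha
      obtain ⟨-, h⟩ := Finset.mem_filter.mp ha
      exact Prod.ext (Fin.ext (show (0:ℕ) = a.val from h.1.symm)) (Fin.ext rfl)
    · intro b hb; rfl
  have c2 : (Finset.univ.filter (fun p : Fin n × Fin n => 0 < p.1.val ∧ p.2.val = p.1.val + 1 ∧ p.2.val < n)).card
      = (Finset.Ico 1 (n - 1)).card := by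
    refine Finset.card_bij' (fun p _ => p.1.val)
      (fun a ha => (⟨a, by have := Finset.mem_Ico.mp ha; omega⟩,
                    ⟨a + 1, by have := Finset.mem_Ico.mp ha; omega⟩)) ?_ ?_ ?_ ?_
    · rintro ⟨a, b⟩ ha
      obtain ⟨-, h⟩ := Finset.mem_filter.mp ha
      dsimp only at h ⊢
      exact Finset.mem_Ico.mpr ⟨h.1, by omega⟩
    · intro a ha
      have h := Finset.mem_Ico.mp ha
      exact Finset.mem_filter.mpr ⟨Finset.mem_univ _, show 0 < a ∧ a + 1 = a + 1 ∧ a + 1 < n by omega⟩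
    · rintro ⟨a, b⟩ ha
      obtain ⟨-, h⟩ := Finset.mem_filter.mp ha
      exact Prod.ext (Fin.ext rfl) (Fin.ext (show a.val + 1 = b.val from h.2.1.symm))
    · intro a ha; rfl
  have c3 : (Finset.univ.filter (fun p : Fin n × Fin n => p.1.val = 1 ∧ p.2.val = n - 1)).card = 1 := by
    have hs : (Finset.univ.filter (fun p : Fin n × Fin n => p.1.val = 1 ∧ p.2.val = n - 1))
        = {((⟨1, by omega⟩ : Fin n), (⟨n - 1, by omega⟩ : Fin n))} := by
      ext ⟨a, b⟩
      simp only [Finset.mem_filter, Finset.mem_univ, true_and, Finset.mem_singleton, Prod.mk.injEq]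
      constructor
      · rintro ⟨h1, h2⟩
        exact ⟨Fin.ext h1, Fin.ext h2⟩
      · rintro ⟨rfl, rfl⟩
        exact ⟨rfl, rfl⟩
    rw [hs, Finset.card_singleton]
  have c4 : (Finset.univ.filter (fun p : Fin n × Fin n => p.1.val = 1 ∧ p.2.val % 2 = 0 ∧ 4 ≤ p.2.val ∧ p.2.val ≤ n - 3)).card
      = (Finset.range ((n - 5) / 2)).card := by
    refine Finset.card_bij' (fun p _ => (p.2.val - 4) / 2)
      (fun k hk => ((⟨1, by omega⟩ : Fin n),
        (⟨2 * k + 4, by have := Finset.mem_range.mp hk; omega⟩ : Fin n))) ?_ ?_ ?_ ?_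
    · rintro ⟨a, b⟩ ha
      obtain ⟨-, h⟩ := Finset.mem_filter.mp ha
      dsimp only at h ⊢
      exact Finset.mem_range.mpr (by omega)
    · intro k hk
      have h := Finset.mem_range.mp hk
      refine Finset.mem_filter.mpr ⟨Finset.mem_univ _, ?_⟩
      show (1:ℕ) = 1 ∧ (2 * k + 4) % 2 = 0 ∧ 4 ≤ 2 * k + 4 ∧ 2 * k + 4 ≤ n - 3
      omega
    · rintro ⟨a, b⟩ ha
      obtain ⟨-, h⟩ := Finset.mem_filter.mp ha
      dsimp only at h
      refine Prod.ext (Fin.ext (show (1:ℕ) = a.val from h.1.symm))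
        (Fin.ext (show 2 * ((b.val - 4) / 2) + 4 = b.val by omega))
    · intro k hk
      show (2 * k + 4 - 4) / 2 = k
      omega
  rw [h1]
  rw [Finset.card_union_of_disjoint, Finset.card_union_of_disjoint, Finset.card_union_of_disjoint,
    c1, c2, c3, c4, Nat.card_Ico, Nat.card_Ico, Finset.card_range]
  · omega
  all_goals
    rw [Finset.disjoint_left]
    rintro ⟨a, b⟩ ha hb
    simp only [Finset.mem_union, Finset.mem_filter, Finset.mem_univ, true_and] at ha hb
    omega


lemma myG_triangle {n : ℕ} (hn : 6 ≤ n) {x y z : Fin n}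
    (hxy : (myG n).Adj x y) (hyz : (myG n).Adj y z) (hxz : (myG n).Adj x z) :
    x.val = 0 ∨ y.val = 0 ∨ z.val = 0 := by
  rw [myG_adj hn] at hxy hyz hxz
  have hx := x.isLt; have hy := y.isLt; have hz := z.isLt
  unfold Erel at hxy hyz hxz
  omega

lemma no2C3 {n : ℕ} {G : SimpleGraph (Fin n)}
    (htri : ∀ x y z : Fin n, G.Adj x y → G.Adj y z → G.Adj x z →
      x.val = 0 ∨ y.val = 0 ∨ z.val = 0) :
    ¬ ContainsCopy G (copies 2 (cycleGraph 3)) := by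
  rintro ⟨f, hf⟩
  have hc : ∀ a b : Fin 3, a ≠ b → (cycleGraph 3).Adj a b := by decide
  have adj : ∀ (i : Fin 2) (a b : Fin 3), a ≠ b → G.Adj (f (i, a)) (f (i, b)) := by
    intro i a b hab
    exact f.map_adj ⟨rfl, hc a b hab⟩
  have key : ∀ i : Fin 2, ∃ a : Fin 3, (f (i, a)).val = 0 := by
    intro i
    rcases htri _ _ _ (adj i 0 1 (by decide)) (adj i 1 2 (by decide)) (adj i 0 2 (by decide))
      with h | h | h
    exacts [⟨0, h⟩, ⟨1, h⟩, ⟨2, h⟩]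
  obtain ⟨a, ha⟩ := key 0
  obtain ⟨b, hb⟩ := key 1
  have h1 : f (0, a) = f (1, b) := Fin.val_injective (ha.trans hb.symm)
  have h2 := hf h1
  simp at h2

lemma ceil_eq (n : ℕ) (hn : 6 ≤ n) :
    ((2 * n - 2 + (n - 5) / 2 : ℕ) : ℤ) = ⌈(5 * (n : ℚ) / 2)⌉ - 5 := by
  rcases Nat.even_or_odd n with ⟨k, hk⟩ | ⟨k, hk⟩
  · have hceil : ⌈(5 * (n : ℚ) / 2)⌉ = 5 * (k : ℤ) := by
      rw [show (5 * (n : ℚ) / 2) = ((5 * (k : ℤ) : ℤ) : ℚ) by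
        subst hk; push_cast; ring]
      exact Int.ceil_intCast _
    rw [hceil]
    omega
  · have hceil : ⌈(5 * (n : ℚ) / 2)⌉ = 5 * (k : ℤ) + 3 := by
      rw [Int.ceil_eq_iff]
      subst hk
      constructor
      · push_cast; linarith
      · push_cast; linarith
    rw [hceil]
    omega

/-- For every `n ≥ 6`, there is a planar graph on `n` vertices with `⌈5n/2⌉ - 5` edges
containing no two vertex-disjoint triangles; consequently `ex_P(n, 2C₃) ≥ ⌈5n/2⌉ - 5`. -/
theorem stmt_19 (n : ℕ) (hn : 6 ≤ n) :
    (∃ G : SimpleGraph (Fin n), IsPlanar G ∧ ¬ ContainsCopy G (copies 2 (cycleGraph 3)) ∧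
      (G.edgeSet.ncard : ℤ) = ⌈(5 * (n : ℚ) / 2)⌉ - 5) ∧
    ⌈(5 * (n : ℚ) / 2)⌉ - 5 ≤ (exP n (copies 2 (cycleGraph 3)) : ℤ) := by
  have hcard : (myG n).edgeSet.ncard = 2 * n - 2 + (n - 5) / 2 := by
    rw [myG_edgeSet hn, Set.ncard_coe_finset, Finset.card_image_of_injOn (Tset_injOn hn),
      Tset_card hn]
  have hfree : ¬ ContainsCopy (myG n) (copies 2 (cycleGraph 3)) :=
    no2C3 (fun x y z hxy hyz hxz => myG_triangle hn hxy hyz hxz)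
  have hZeq : ((myG n).edgeSet.ncard : ℤ) = ⌈(5 * (n : ℚ) / 2)⌉ - 5 := by
    rw [hcard]; exact ceil_eq n hn
  refine ⟨⟨myG n, myG_planar hn, hfree, hZeq⟩, ?_⟩
  have hmem : (myG n).edgeSet.ncard ∈
      {m | ∃ G : SimpleGraph (Fin n), IsPlanar G ∧ ¬ ContainsCopy G (copies 2 (cycleGraph 3)) ∧
        G.edgeSet.ncard = m} :=
    ⟨myG n, myG_planar hn, hfree, rfl⟩
  have hbdd : BddAbove {m | ∃ G : SimpleGraph (Fin n), IsPlanar G ∧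
      ¬ ContainsCopy G (copies 2 (cycleGraph 3)) ∧ G.edgeSet.ncard = m} := by
    refine ⟨Nat.card (Sym2 (Fin n)), ?_⟩
    rintro m ⟨G', -, -, rfl⟩
    calc G'.edgeSet.ncard ≤ (Set.univ : Set (Sym2 (Fin n))).ncard :=
          Set.ncard_le_ncard (Set.subset_univ _) Set.finite_univ
      _ = Nat.card (Sym2 (Fin n)) := Set.ncard_univ _
  have hle : (myG n).edgeSet.ncard ≤ exP n (copies 2 (cycleGraph 3)) := le_csSup hbdd hmem
  rw [← hZeq]
  exact_mod_cast hle
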